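/- Let d, k, ℓ be positive integers with 2k > d, let ε ∈ (0,1) with ε > 2k/ℓ, and let ρ : ℝ^d → ℝ be a positive measurable function satisfying (1-ε)-slow growth with constant C_sg > 0. Then there exists a constant C > 0, depending only on d, k, ℓ, ε and C_sg, such that for every x ∈ ℝ^d, ∫_{ℝ^d} ρ(α)^{2k-d} · (1 + |x-α|/ρ(α))^{-(ℓ+d-2k)} dα ≤ C · ρ(x)^{2k} (in particular the integral is finite). -/

import Mathlib

open Real MeasureTheory Module
open scoped ENNReal

-- pointwise bound
lemma slow_growth_pointwise_aux (kd m ε s Csg c r t ra : ℝ)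
    (hkd : 0 < kd) (hm : 0 < m) (hε0 : 0 < ε) (hε1 : ε < 1)
    (hse : (1 - ε) * kd - ε * m = -s)
    (hCsg : 0 < Csg) (hc : c = min 1 Csg⁻¹ / 2) (hr : 0 < r) (ht : 0 ≤ t)
    (hra : 0 < ra) (hbound : ra ≤ Csg * r * (1 + t / r) ^ (1 - ε)) :
    ra ^ kd * (1 + t / ra) ^ (-m) ≤
      (Csg ^ kd * c ^ (-m)) * r ^ kd * (1 + t / r) ^ (-s) := by
  have hu1 : (1:ℝ) ≤ 1 + t / r := le_add_of_nonneg_right (div_nonneg ht hr.le)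
  have hu0 : (0:ℝ) < 1 + t / r := lt_of_lt_of_le one_pos hu1
  set u : ℝ := 1 + t / r with hu
  have hB : 0 < Csg * r * u ^ (1 - ε) := by positivity
  set B : ℝ := Csg * r * u ^ (1 - ε) with hBdef
  have hc0 : 0 < c := by rw [hc]; positivity
  -- first factor
  have h1 : ra ^ kd ≤ B ^ kd := Real.rpow_le_rpow hra.le hbound hkd.le
  -- second factor step 1
  have h2 : (1 + t / ra) ^ (-m) ≤ (1 + t / B) ^ (-m) := by
    apply Real.rpow_le_rpow_of_nonpos (by positivity) _ (neg_nonpos.mpr hm.le)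
    have : t / B ≤ t / ra := div_le_div_of_nonneg_left ht hra hbound
    linarith
  -- second factor step 2 : c * u ^ ε ≤ 1 + t / B
  have htur : t = (u - 1) * r := by rw [hu, add_sub_cancel_left, div_mul_cancel₀ t hr.ne']
  have h3 : c * u ^ ε ≤ 1 + t / B := by
    rcases le_total u 2 with h | h
    · have huε : u ^ ε ≤ u := by
        calc u ^ ε ≤ u ^ (1:ℝ) := Real.rpow_le_rpow_of_exponent_le hu1 hε1.le
        _ = u := Real.rpow_one u
      have hc2 : c ≤ 1/2 := by rw [hc]; have := min_le_left (1:ℝ) Csg⁻¹; linarith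
      have : c * u ^ ε ≤ (1/2) * 2 := by
        apply mul_le_mul hc2 (le_trans huε h) (by positivity) (by norm_num)
      have hnn : 0 ≤ t / B := div_nonneg ht hB.le
      linarith
    · have hcC : c ≤ 1 / (2 * Csg) := by
        rw [hc]; rw [div_le_div_iff₀ (by norm_num) (by positivity)]
        have := min_le_right (1:ℝ) Csg⁻¹
        calc min 1 Csg⁻¹ * (2 * Csg) ≤ Csg⁻¹ * (2 * Csg) := by
              apply mul_le_mul_of_nonneg_right this (by positivity)
        _ = 1 * 2 := by field_simp
      set v : ℝ := u ^ (1 - ε) with hv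
      have hv0 : 0 < v := Real.rpow_pos_of_pos hu0 _
      have huev : u ^ ε = u / v := by
        rw [hv, eq_div_iff hv0.ne', ← Real.rpow_add hu0]
        norm_num
      have htB : t / B = (u - 1) / (Csg * v) := by
        rw [htur, hBdef, mul_comm Csg r, mul_assoc, mul_comm (u - 1) r,
          mul_div_mul_left _ _ hr.ne']
      have hcC2 : c * (2 * Csg) ≤ 1 := by
        rw [← le_div_iff₀ (by positivity : (0:ℝ) < 2 * Csg)]; exact hcC
      have hcu : c * u ≤ (u - 1) / Csg := by
        rw [le_div_iff₀ hCsg]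
        nlinarith [mul_le_mul_of_nonneg_right hcC2 hu0.le]
      have key : c * (u / v) ≤ (u - 1) / (Csg * v) := by
        calc c * (u / v) = c * u / v := by ring
        _ ≤ (u - 1) / Csg / v := by gcongr
        _ = (u - 1) / (Csg * v) := by rw [div_div]
      calc c * u ^ ε = c * (u / v) := by rw [huev]
      _ ≤ (u - 1) / (Csg * v) := key
      _ = t / B := htB.symm
      _ ≤ 1 + t / B := by linarith
  have h4 : (1 + t / B) ^ (-m) ≤ (c * u ^ ε) ^ (-m) := by
    apply Real.rpow_le_rpow_of_nonpos (by positivity) _ (neg_nonpos.mpr hm.le)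
    exact h3
  -- combine
  have hBpow : B ^ kd = Csg ^ kd * r ^ kd * u ^ ((1 - ε) * kd) := by
    rw [hBdef, Real.mul_rpow (by positivity) (by positivity),
      Real.mul_rpow hCsg.le hr.le, Real.rpow_mul hu0.le]
  have hcpow : (c * u ^ ε) ^ (-m) = c ^ (-m) * u ^ (ε * (-m)) := by
    rw [Real.mul_rpow hc0.le (Real.rpow_pos_of_pos hu0 _).le, ← Real.rpow_mul hu0.le]
  calc ra ^ kd * (1 + t / ra) ^ (-m) ≤ B ^ kd * (c * u ^ ε) ^ (-m) := by
        apply mul_le_mul h1 (le_trans h2 h4) (Real.rpow_nonneg (by positivity) _)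
          (Real.rpow_nonneg hB.le _)
  _ = (Csg ^ kd * c ^ (-m)) * r ^ kd * (u ^ ((1 - ε) * kd) * u ^ (ε * (-m))) := by
        rw [hBpow, hcpow]; ring
  _ = (Csg ^ kd * c ^ (-m)) * r ^ kd * u ^ (-s) := by
        rw [← Real.rpow_add hu0]; congr 1; rw [← hse]; ring

lemma slow_growth_scale_aux (d : ℕ) (s : ℝ) (hs : (d : ℝ) < s) :
    ∃ J : ℝ, 0 ≤ J ∧ ∀ r : ℝ, 0 < r → ∀ x : EuclideanSpace ℝ (Fin d),
      (∫⁻ α, ENNReal.ofReal ((1 + ‖x - α‖ / r) ^ (-s)))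
        ≤ ENNReal.ofReal (J * r ^ (d : ℝ)) := by
  have hfr : finrank ℝ (EuclideanSpace ℝ (Fin d)) = d := finrank_euclideanSpace_fin
  have hJ0 : (∫⁻ y : EuclideanSpace ℝ (Fin d), ENNReal.ofReal ((1 + ‖y‖) ^ (-s))) < ⊤ :=
    finite_integral_one_add_norm (by rw [hfr]; exact hs)
  set J0 : ℝ≥0∞ := ∫⁻ y : EuclideanSpace ℝ (Fin d), ENNReal.ofReal ((1 + ‖y‖) ^ (-s))
    with hJ0def
  refine ⟨J0.toReal, ENNReal.toReal_nonneg, fun r hr x => ?_⟩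
  set f : EuclideanSpace ℝ (Fin d) → ℝ≥0∞ :=
    fun β => ENNReal.ofReal ((1 + ‖β‖ / r) ^ (-s)) with hfdef
  have hf : Measurable f := by
    have : Measurable fun β : EuclideanSpace ℝ (Fin d) => (1 + ‖β‖ / r) ^ (-s) := by fun_prop
    exact this.ennreal_ofReal
  have step1 : (∫⁻ α, f (x - α)) = ∫⁻ β, f β :=
    (Measure.measurePreserving_sub_left volume x).lintegral_comp hf
  have hsmul : ∀ y : EuclideanSpace ℝ (Fin d), f (r • y) = ENNReal.ofReal ((1 + ‖y‖) ^ (-s)) := by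
    intro y
    have : ‖r • y‖ / r = ‖y‖ := by
      rw [norm_smul, Real.norm_eq_abs, abs_of_pos hr, mul_comm, mul_div_assoc,
        div_self hr.ne', mul_one]
    simp only [hfdef, this]
  have step2 : J0 = ENNReal.ofReal (|(r ^ finrank ℝ (EuclideanSpace ℝ (Fin d)))⁻¹|)
      * ∫⁻ β, f β := by
    calc J0 = ∫⁻ y, f (r • y) := by rw [hJ0def]; exact (lintegral_congr hsmul).symm
    _ = ∫⁻ β, f β ∂(Measure.map (r • ·) volume) :=
        (lintegral_map hf (measurable_const_smul r)).symm
    _ = _ := by rw [Measure.map_addHaar_smul volume hr.ne', lintegral_smul_measure, smul_eq_mul]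
  have hrd : (0:ℝ) < r ^ finrank ℝ (EuclideanSpace ℝ (Fin d)) := by positivity
  rw [abs_inv, abs_of_pos hrd, ENNReal.ofReal_inv_of_pos hrd] at step2
  set a : ℝ≥0∞ := ENNReal.ofReal (r ^ finrank ℝ (EuclideanSpace ℝ (Fin d))) with hadef
  have ha0 : a ≠ 0 := by
    simp only [hadef, ne_eq, ENNReal.ofReal_eq_zero, not_le]; exact hrd
  have hatop : a ≠ ⊤ := ENNReal.ofReal_ne_top
  have step3 : (∫⁻ β, f β) = a * J0 := by
    rw [step2, ← mul_assoc, ENNReal.mul_inv_cancel ha0 hatop, one_mul]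
  have key : (∫⁻ α, f (x - α)) = a * J0 := by rw [step1, step3]
  have : (∫⁻ α, ENNReal.ofReal ((1 + ‖x - α‖ / r) ^ (-s))) = a * J0 := key
  rw [this, hadef, hfr]
  have heq : ENNReal.ofReal (r ^ d) * J0
      = ENNReal.ofReal (r ^ d) * ENNReal.ofReal J0.toReal := by
    rw [ENNReal.ofReal_toReal hJ0.ne]
  rw [heq, ← ENNReal.ofReal_mul (by positivity)]
  apply ENNReal.ofReal_le_ofReal
  rw [← Real.rpow_natCast r d]
  exact le_of_eq (mul_comm _ _)


/-- For positive integers `d, k, ℓ` with `2k > d`, `ε ∈ (0,1)` with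
`ε > 2k/ℓ`, and a positive measurable `ρ` satisfying `(1-ε)`-slow growth with constant
`C_sg`, there is `C > 0` depending only on `d, k, ℓ, ε, C_sg` such that for every `x`,
`∫ ρ(α)^(2k-d) (1 + |x-α|/ρ(α))^(-(ℓ+d-2k)) dα ≤ C ρ(x)^(2k)` (in particular the
integral is finite). -/
theorem slow_growth_integral_bound
    (d k l : ℕ) (hd : 0 < d) (hk : 0 < k) (hl : 0 < l) (hdk : d < 2 * k)
    (ε : ℝ) (hε0 : 0 < ε) (hε1 : ε < 1) (hεl : (2 * k : ℝ) / l < ε)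
    (Csg : ℝ) (hCsg : 0 < Csg) :
    ∃ C > 0, ∀ ρ : EuclideanSpace ℝ (Fin d) → ℝ, Measurable ρ → (∀ x, 0 < ρ x) →
      (∀ x α, ρ α ≤ Csg * ρ x * (1 + ‖x - α‖ / ρ x) ^ (1 - ε)) →
      ∀ x, (∫⁻ α, ENNReal.ofReal
          (ρ α ^ ((2 * k : ℝ) - d) * (1 + ‖x - α‖ / ρ α) ^ (-((l : ℝ) + d - 2 * k))))
        ≤ ENNReal.ofReal (C * ρ x ^ (2 * k : ℝ)) := by
  have hl0 : (0:ℝ) < l := by exact_mod_cast hl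
  have hlk : (2 * k : ℝ) < ε * l := by
    rw [div_lt_iff₀ hl0] at hεl; linarith
  have hkd : (0:ℝ) < (2 * k : ℝ) - d := by
    have : (d:ℝ) < 2 * k := by exact_mod_cast hdk
    linarith
  have hm : (0:ℝ) < (l : ℝ) + d - 2 * k := by
    have h1 : ε * l < l := by nlinarith
    have h2 : (0:ℝ) ≤ d := Nat.cast_nonneg d
    linarith
  set s : ℝ := ε * l - 2 * k + d with hsdef
  have hds : (d:ℝ) < s := by rw [hsdef]; linarith
  obtain ⟨J, hJ0, hJ⟩ := slow_growth_scale_aux d s hds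
  set c : ℝ := min 1 Csg⁻¹ / 2 with hcdef
  have hc0 : 0 < c := div_pos (lt_min one_pos (inv_pos.mpr hCsg)) two_pos
  set C1 : ℝ := Csg ^ ((2 * k : ℝ) - d) * c ^ (-((l : ℝ) + d - 2 * k)) with hC1def
  have hC1 : 0 < C1 :=
    mul_pos (Real.rpow_pos_of_pos hCsg _) (Real.rpow_pos_of_pos hc0 _)
  refine ⟨C1 * (J + 1), mul_pos hC1 (by linarith), ?_⟩
  intro ρ hρm hρ0 hρsg x
  have hr : 0 < ρ x := hρ0 x
  calc (∫⁻ α, ENNReal.ofReal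
          (ρ α ^ ((2 * k : ℝ) - d) * (1 + ‖x - α‖ / ρ α) ^ (-((l : ℝ) + d - 2 * k))))
      ≤ ∫⁻ α, ENNReal.ofReal
          (C1 * ρ x ^ ((2 * k : ℝ) - d) * (1 + ‖x - α‖ / ρ x) ^ (-s)) := by
        apply lintegral_mono
        intro α
        apply ENNReal.ofReal_le_ofReal
        have hptw := slow_growth_pointwise_aux ((2 * k : ℝ) - d) ((l : ℝ) + d - 2 * k)
          ε s Csg c (ρ x) (‖x - α‖) (ρ α) hkd hm hε0 hε1 (by rw [hsdef]; ring)
          hCsg hcdef hr (norm_nonneg _) (hρ0 α) (hρsg x α)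
        calc ρ α ^ ((2 * k : ℝ) - d) * (1 + ‖x - α‖ / ρ α) ^ (-((l : ℝ) + d - 2 * k))
            ≤ (Csg ^ ((2 * k : ℝ) - d) * c ^ (-((l : ℝ) + d - 2 * k)))
              * ρ x ^ ((2 * k : ℝ) - d) * (1 + ‖x - α‖ / ρ x) ^ (-s) := hptw
        _ = C1 * ρ x ^ ((2 * k : ℝ) - d) * (1 + ‖x - α‖ / ρ x) ^ (-s) := by
              rw [hC1def]
    _ = ENNReal.ofReal (C1 * ρ x ^ ((2 * k : ℝ) - d))
          * ∫⁻ α, ENNReal.ofReal ((1 + ‖x - α‖ / ρ x) ^ (-s)) := by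
        rw [← lintegral_const_mul' _ _ ENNReal.ofReal_ne_top]
        apply lintegral_congr
        intro α
        rw [← ENNReal.ofReal_mul (by positivity)]
    _ ≤ ENNReal.ofReal (C1 * ρ x ^ ((2 * k : ℝ) - d))
          * ENNReal.ofReal (J * ρ x ^ (d : ℝ)) :=
        mul_le_mul_right (hJ (ρ x) hr x) _
    _ ≤ ENNReal.ofReal (C1 * (J + 1) * ρ x ^ (2 * k : ℝ)) := by
        rw [← ENNReal.ofReal_mul (by positivity)]
        apply ENNReal.ofReal_le_ofReal
        have hpow : ρ x ^ ((2 * k : ℝ) - d) * ρ x ^ (d : ℝ) = ρ x ^ (2 * k : ℝ) := by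
          rw [← Real.rpow_add hr]; congr 1; ring
        calc C1 * ρ x ^ ((2 * k : ℝ) - d) * (J * ρ x ^ (d : ℝ))
            = C1 * J * (ρ x ^ ((2 * k : ℝ) - d) * ρ x ^ (d : ℝ)) := by ring
        _ = C1 * J * ρ x ^ (2 * k : ℝ) := by rw [hpow]
        _ ≤ C1 * (J + 1) * ρ x ^ (2 * k : ℝ) := by
              have h7 := Real.rpow_nonneg hr.le (2 * k : ℝ)
              nlinarith
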